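/- arXiv:1703.06362 — 5 statements merged into one kernel-verified Lean document; each statement's English description precedes it below -/
import Mathlib

section
/- Let σ = ∫₀^{π/2} dα/√(1 + sin²α) and I = ∫₀^{π/2} sin⁴α/√(1 + sin²α) dα. Then I = σ/3. -/
open Real intervalIntegral

lemma key_deriv (x : ℝ) :
    HasDerivAt (fun t => Real.sin t * Real.cos t * Real.sqrt (1 + Real.sin t ^ 2))
      ((1 - 3 * Real.sin x ^ 4) / Real.sqrt (1 + Real.sin x ^ 2)) x := by
  have hpos : (0:ℝ) < 1 + Real.sin x ^ 2 := by positivity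
  have hs : Real.sqrt (1 + Real.sin x ^ 2) ≠ 0 := by positivity
  have h1 : HasDerivAt (fun t => 1 + Real.sin t ^ 2) (2 * Real.sin x * Real.cos x) x := by
    have := ((Real.hasDerivAt_sin x).pow 2).const_add 1
    simpa [mul_comm, mul_assoc, mul_left_comm] using this
  have h2 : HasDerivAt (fun t => Real.sqrt (1 + Real.sin t ^ 2))
      (2 * Real.sin x * Real.cos x / (2 * Real.sqrt (1 + Real.sin x ^ 2))) x :=
    h1.sqrt hpos.ne'
  have h3 : HasDerivAt (fun t => Real.sin t * Real.cos t)
      (Real.cos x * Real.cos x + Real.sin x * (-Real.sin x)) x :=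
    (Real.hasDerivAt_sin x).mul (Real.hasDerivAt_cos x)
  have h4 : HasDerivAt (fun t => Real.sin t * Real.cos t * Real.sqrt (1 + Real.sin t ^ 2)) _ x :=
    h3.mul h2
  convert h4 using 1
  have hsq : Real.sqrt (1 + Real.sin x ^ 2) ^ 2 = 1 + Real.sin x ^ 2 :=
    Real.sq_sqrt hpos.le
  have hc : Real.cos x ^ 2 = 1 - Real.sin x ^ 2 := Real.cos_sq' x
  field_simp
  linear_combination (-(Real.cos x ^ 2 - Real.sin x ^ 2)) * hsq +
    (-(1 + 2 * Real.sin x ^ 2)) * hc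

theorem sin_pow_four_integral :
    (∫ α in (0:ℝ)..(Real.pi / 2), (Real.sin α)^4 / Real.sqrt (1 + (Real.sin α)^2)) =
    (∫ α in (0:ℝ)..(Real.pi / 2), 1 / Real.sqrt (1 + (Real.sin α)^2)) / 3 := by
  have hcont : Continuous (fun t : ℝ => Real.sqrt (1 + Real.sin t ^ 2)) :=
    (continuous_const.add (Real.continuous_sin.pow 2)).sqrt
  have hne : ∀ t : ℝ, Real.sqrt (1 + Real.sin t ^ 2) ≠ 0 := fun t => by positivity
  have c1 : Continuous (fun t : ℝ => (1 - 3 * Real.sin t ^ 4) / Real.sqrt (1 + Real.sin t ^ 2)) :=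
    (continuous_const.sub (continuous_const.mul (Real.continuous_sin.pow 4))).div hcont hne
  have c2 : Continuous (fun t : ℝ => Real.sin t ^ 4 / Real.sqrt (1 + Real.sin t ^ 2)) :=
    (Real.continuous_sin.pow 4).div hcont hne
  have c3 : Continuous (fun t : ℝ => 1 / Real.sqrt (1 + Real.sin t ^ 2)) :=
    continuous_const.div hcont hne
  have hftc : (∫ α in (0:ℝ)..(Real.pi / 2),
      (1 - 3 * Real.sin α ^ 4) / Real.sqrt (1 + Real.sin α ^ 2)) = 0 := by
    rw [intervalIntegral.integral_eq_sub_of_hasDerivAt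
      (fun x _ => key_deriv x) (c1.intervalIntegrable _ _)]
    simp [Real.sin_pi_div_two, Real.cos_pi_div_two]
  have hsplit : (∫ α in (0:ℝ)..(Real.pi / 2),
      (1 - 3 * Real.sin α ^ 4) / Real.sqrt (1 + Real.sin α ^ 2)) =
      (∫ α in (0:ℝ)..(Real.pi / 2), 1 / Real.sqrt (1 + Real.sin α ^ 2)) -
      3 * (∫ α in (0:ℝ)..(Real.pi / 2), Real.sin α ^ 4 / Real.sqrt (1 + Real.sin α ^ 2)) := by
    rw [← intervalIntegral.integral_const_mul, ← intervalIntegral.integral_sub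
      (c3.intervalIntegrable _ _) ((c2.intervalIntegrable _ _).const_mul 3)]
    congr 1; ext t
    field_simp
  rw [hsplit] at hftc
  linarith
end

section
/- For every δ > 0, the quantity g(δ) := 64 · (∫₀^{π/2} sin⁴α/√(2/δ² + 1 + sin²α) dα) · (∫₀^{π/2} dα/√(2/δ² + 1 + sin²α))³ satisfies 0 < g(δ) < (64/3)·σ⁴, where σ = ∫₀^{π/2} dα/√(1 + sin²α). -/
open Real intervalIntegral

lemma sqrt_pos_aux (c x : ℝ) (hc : 0 ≤ c) : 0 < Real.sqrt (c + 1 + Real.sin x ^ 2) :=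
  Real.sqrt_pos.2 (by positivity)

lemma cont_aux (c : ℝ) (hc : 0 ≤ c) :
    Continuous (fun x : ℝ => 1 / Real.sqrt (c + 1 + Real.sin x ^ 2)) := by
  apply Continuous.div continuous_const
  · exact (continuous_const.add (Real.continuous_sin.pow 2)).sqrt
  · exact fun x => (sqrt_pos_aux c x hc).ne'

lemma cont_aux2 (c : ℝ) (hc : 0 ≤ c) :
    Continuous (fun x : ℝ => Real.sin x ^ 4 / Real.sqrt (c + 1 + Real.sin x ^ 2)) := by
  apply Continuous.div (Real.continuous_sin.pow 4)
  · exact (continuous_const.add (Real.continuous_sin.pow 2)).sqrt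
  · exact fun x => (sqrt_pos_aux c x hc).ne'

lemma deriv_aux (t : ℝ) :
    HasDerivAt (fun t => -(1/3) * (Real.sin t * Real.cos t * Real.sqrt (1 + Real.sin t^2)))
      ((Real.sin t^4 - 1/3) / Real.sqrt (1 + Real.sin t^2)) t := by
  have hs := Real.hasDerivAt_sin t
  have hc := Real.hasDerivAt_cos t
  have hXpos : (0:ℝ) < 1 + Real.sin t^2 := by positivity
  have hX : HasDerivAt (fun t : ℝ => 1 + Real.sin t^2) (2 * Real.sin t * Real.cos t) t := by
    simpa [mul_comm, mul_assoc, mul_left_comm] using ((hs.pow 2).const_add 1)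
  have hsq : HasDerivAt (fun t : ℝ => Real.sqrt (1 + Real.sin t^2))
      (1 / (2 * Real.sqrt (1 + Real.sin t^2)) * (2 * Real.sin t * Real.cos t)) t :=
    (Real.hasDerivAt_sqrt hXpos.ne').comp t hX
  have h := ((hs.mul hc).mul hsq).const_mul (-(1/3) : ℝ)
  refine h.congr_deriv ?_
  symm
  have h2 : Real.sqrt (1 + Real.sin t^2) ^ 2 = 1 + Real.sin t^2 := Real.sq_sqrt hXpos.le
  have hne : Real.sqrt (1 + Real.sin t^2) ≠ 0 := (Real.sqrt_pos.2 hXpos).ne'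
  have hpy := Real.sin_sq_add_cos_sq t
  have h3 : Real.sqrt (1 + Real.sin t^2) * (Real.sqrt (1 + Real.sin t^2))⁻¹ = 1 := mul_inv_cancel₀ hne
  simp only [Pi.mul_apply]
  rw [div_eq_iff hne]
  linear_combination (1/3*(1+2*Real.sin t^2)) * hpy + (1/3*(Real.cos t^2 - Real.sin t^2)) * h2 + (1/3*Real.sin t^2*Real.cos t^2) * h3

lemma key_identity :
    (∫ α in (0:ℝ)..(Real.pi / 2), Real.sin α ^ 4 / Real.sqrt (1 + Real.sin α ^ 2)) =
    (1/3) * ∫ α in (0:ℝ)..(Real.pi / 2), 1 / Real.sqrt (1 + Real.sin α ^ 2) := by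
  have hint : ∀ c : ℝ, 0 ≤ c →
      IntervalIntegrable (fun x : ℝ => Real.sin x ^ 4 / Real.sqrt (c + 1 + Real.sin x ^ 2))
        MeasureTheory.volume 0 (Real.pi/2) := fun c hc => (cont_aux2 c hc).intervalIntegrable _ _
  have h1 : IntervalIntegrable (fun x : ℝ => 1 / Real.sqrt (1 + Real.sin x ^ 2))
      MeasureTheory.volume 0 (Real.pi/2) := by
    have : IntervalIntegrable (fun x : ℝ => 1 / Real.sqrt (0 + 1 + Real.sin x ^ 2))
        MeasureTheory.volume 0 (Real.pi/2) := (cont_aux 0 le_rfl).intervalIntegrable _ _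
    simpa using this
  have h2 : IntervalIntegrable (fun x : ℝ => Real.sin x ^ 4 / Real.sqrt (1 + Real.sin x ^ 2))
      MeasureTheory.volume 0 (Real.pi/2) := by
    have := hint 0 le_rfl
    simpa using this
  have hzero : (∫ α in (0:ℝ)..(Real.pi / 2),
      (Real.sin α ^ 4 - 1/3) / Real.sqrt (1 + Real.sin α ^ 2)) = 0 := by
    rw [intervalIntegral.integral_eq_sub_of_hasDerivAt (fun t _ => deriv_aux t)]
    · simp [Real.cos_pi_div_two]
    · apply Continuous.intervalIntegrable
      apply Continuous.div ((Real.continuous_sin.pow 4).sub continuous_const)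
      · exact (continuous_const.add (Real.continuous_sin.pow 2)).sqrt
      · intro x
        have := sqrt_pos_aux 0 x le_rfl
        simpa using this.ne'
  have heq : ∀ α : ℝ, (Real.sin α ^ 4 - 1/3) / Real.sqrt (1 + Real.sin α ^ 2) =
      Real.sin α ^ 4 / Real.sqrt (1 + Real.sin α ^ 2) -
      (1/3) * (1 / Real.sqrt (1 + Real.sin α ^ 2)) := by
    intro α; field_simp
  rw [intervalIntegral.integral_congr (fun x _ => heq x)] at hzero
  rw [intervalIntegral.integral_sub h2 (h1.const_mul _)] at hzero
  rw [intervalIntegral.integral_const_mul] at hzero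
  linarith

theorem g_bound (δ : ℝ) (hδ : 0 < δ) :
    0 < 64 * (∫ α in (0:ℝ)..(Real.pi / 2),
        (Real.sin α)^4 / Real.sqrt (2 / δ^2 + 1 + (Real.sin α)^2)) *
      (∫ α in (0:ℝ)..(Real.pi / 2),
        1 / Real.sqrt (2 / δ^2 + 1 + (Real.sin α)^2))^3 ∧
    64 * (∫ α in (0:ℝ)..(Real.pi / 2),
        (Real.sin α)^4 / Real.sqrt (2 / δ^2 + 1 + (Real.sin α)^2)) *
      (∫ α in (0:ℝ)..(Real.pi / 2),
        1 / Real.sqrt (2 / δ^2 + 1 + (Real.sin α)^2))^3 <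
    64 / 3 * (∫ α in (0:ℝ)..(Real.pi / 2), 1 / Real.sqrt (1 + (Real.sin α)^2))^4 := by
  have hc : (0:ℝ) < 2 / δ^2 := by positivity
  set c := 2 / δ^2 with hcdef
  have hpi : (0:ℝ) < Real.pi / 2 := by positivity
  -- integrability
  have hA : IntervalIntegrable (fun x : ℝ => Real.sin x ^ 4 / Real.sqrt (c + 1 + Real.sin x ^ 2))
      MeasureTheory.volume 0 (Real.pi/2) := (cont_aux2 c hc.le).intervalIntegrable _ _
  have hB : IntervalIntegrable (fun x : ℝ => 1 / Real.sqrt (c + 1 + Real.sin x ^ 2))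
      MeasureTheory.volume 0 (Real.pi/2) := (cont_aux c hc.le).intervalIntegrable _ _
  have hI : IntervalIntegrable (fun x : ℝ => Real.sin x ^ 4 / Real.sqrt (1 + Real.sin x ^ 2))
      MeasureTheory.volume 0 (Real.pi/2) := by
    have : IntervalIntegrable (fun x : ℝ => Real.sin x ^ 4 / Real.sqrt (0 + 1 + Real.sin x ^ 2))
        MeasureTheory.volume 0 (Real.pi/2) := (cont_aux2 0 le_rfl).intervalIntegrable _ _
    simpa using this
  have hS : IntervalIntegrable (fun x : ℝ => 1 / Real.sqrt (1 + Real.sin x ^ 2))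
      MeasureTheory.volume 0 (Real.pi/2) := by
    have : IntervalIntegrable (fun x : ℝ => 1 / Real.sqrt (0 + 1 + Real.sin x ^ 2))
        MeasureTheory.volume 0 (Real.pi/2) := (cont_aux 0 le_rfl).intervalIntegrable _ _
    simpa using this
  -- positivity of A
  have hApos : 0 < ∫ α in (0:ℝ)..(Real.pi / 2),
      Real.sin α ^ 4 / Real.sqrt (c + 1 + Real.sin α ^ 2) := by
    apply intervalIntegral.intervalIntegral_pos_of_pos_on hA _ hpi
    intro x hx
    have hsx : 0 < Real.sin x := Real.sin_pos_of_pos_of_lt_pi hx.1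
      (lt_trans hx.2 (by linarith [Real.pi_pos]))
    have := sqrt_pos_aux c x hc.le
    positivity
  -- positivity of B
  have hBpos : 0 < ∫ α in (0:ℝ)..(Real.pi / 2),
      1 / Real.sqrt (c + 1 + Real.sin α ^ 2) := by
    apply intervalIntegral.intervalIntegral_pos_of_pos_on hB _ hpi
    intro x _
    have := sqrt_pos_aux c x hc.le
    positivity
  -- A ≤ I
  have hAI : (∫ α in (0:ℝ)..(Real.pi / 2), Real.sin α ^ 4 / Real.sqrt (c + 1 + Real.sin α ^ 2))
      ≤ ∫ α in (0:ℝ)..(Real.pi / 2), Real.sin α ^ 4 / Real.sqrt (1 + Real.sin α ^ 2) := by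
    apply intervalIntegral.integral_mono_on hpi.le hA hI
    intro x _
    apply div_le_div_of_nonneg_left (by positivity) (sqrt_pos_aux 0 x le_rfl |>.trans_le (by simp))
    · exact Real.sqrt_le_sqrt (by linarith)
  -- B < σ
  have hBS : (∫ α in (0:ℝ)..(Real.pi / 2), 1 / Real.sqrt (c + 1 + Real.sin α ^ 2))
      < ∫ α in (0:ℝ)..(Real.pi / 2), 1 / Real.sqrt (1 + Real.sin α ^ 2) := by
    have hdiff : 0 < ∫ α in (0:ℝ)..(Real.pi / 2),
        (1 / Real.sqrt (1 + Real.sin α ^ 2) - 1 / Real.sqrt (c + 1 + Real.sin α ^ 2)) := by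
      apply intervalIntegral.intervalIntegral_pos_of_pos_on (hS.sub hB) _ hpi
      intro x _
      have h1 : 0 < Real.sqrt (1 + Real.sin x ^ 2) := by
        have := sqrt_pos_aux 0 x le_rfl; simpa using this
      have h2 : Real.sqrt (1 + Real.sin x ^ 2) < Real.sqrt (c + 1 + Real.sin x ^ 2) := by
        apply Real.sqrt_lt_sqrt (by positivity) (by linarith)
      have := one_div_lt_one_div_of_lt h1 h2
      linarith
    rw [intervalIntegral.integral_sub hS hB] at hdiff
    linarith
  have hkey := key_identity
  have hSpos : 0 < ∫ α in (0:ℝ)..(Real.pi / 2), 1 / Real.sqrt (1 + Real.sin α ^ 2) := by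
    apply intervalIntegral.intervalIntegral_pos_of_pos_on hS _ hpi
    intro x _
    have : 0 < Real.sqrt (1 + Real.sin x ^ 2) := by
      have := sqrt_pos_aux 0 x le_rfl; simpa using this
    positivity
  constructor
  · positivity
  · set A := ∫ α in (0:ℝ)..(Real.pi / 2), Real.sin α ^ 4 / Real.sqrt (c + 1 + Real.sin α ^ 2)
    set B := ∫ α in (0:ℝ)..(Real.pi / 2), 1 / Real.sqrt (c + 1 + Real.sin α ^ 2)
    set S := ∫ α in (0:ℝ)..(Real.pi / 2), 1 / Real.sqrt (1 + Real.sin α ^ 2)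
    set I := ∫ α in (0:ℝ)..(Real.pi / 2), Real.sin α ^ 4 / Real.sqrt (1 + Real.sin α ^ 2)
    have hB3 : B^3 < S^3 := pow_lt_pow_left₀ hBS hBpos.le (by norm_num)
    have hIpos : 0 < I := by rw [hkey]; linarith
    calc 64 * A * B^3 ≤ 64 * I * B^3 := by nlinarith [pow_pos hBpos 3]
      _ < 64 * I * S^3 := by nlinarith
      _ = 64/3 * S^4 := by rw [hkey]; ring
end

section
/- Let k = δ/√(2(1+δ²)) and let y(t) = δ·cn(t√(1+δ²), k) be the Duffing solution. Then ξ(t) = sn(t√(1+δ²), k) satisfies the Hill equation ξ'' + (1 + δ²/2 + y(t)²)·ξ = 0. -/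
theorem jacobi_sn_solves_hill (δ : ℝ) (sn cn dn : ℝ → ℝ → ℝ)
    (k : ℝ) (hk : k = δ / Real.sqrt (2 * (1 + δ^2)))
    (hsn : ∀ u, HasDerivAt (fun v => sn v k) (cn u k * dn u k) u)
    (hcn : ∀ u, HasDerivAt (fun v => cn v k) (-(sn u k * dn u k)) u)
    (hdn : ∀ u, HasDerivAt (fun v => dn v k) (-(k^2 * cn u k * sn u k)) u)
    (hpyth : ∀ u, (sn u k)^2 + (cn u k)^2 = 1)
    (hdn2 : ∀ u, (dn u k)^2 - k^2 * (cn u k)^2 = 1 - k^2) :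
    ∀ t : ℝ,
      deriv (deriv (fun s => sn (s * Real.sqrt (1 + δ^2)) k)) t
        + (1 + δ^2 / 2 + (δ * cn (t * Real.sqrt (1 + δ^2)) k)^2)
          * sn (t * Real.sqrt (1 + δ^2)) k = 0 := by
  intro t
  set a : ℝ := Real.sqrt (1 + δ^2) with ha
  have ha2 : a^2 = 1 + δ^2 := Real.sq_sqrt (by positivity)
  have hk2 : k^2 * (2 * (1 + δ^2)) = δ^2 := by
    rw [hk, div_pow, Real.sq_sqrt (by positivity : (0:ℝ) ≤ 2 * (1 + δ^2))]
    field_simp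
  have hd1 : deriv (fun s => sn (s * a) k) = fun s => cn (s * a) k * dn (s * a) k * a := by
    funext s
    have h := (hsn (s * a)).comp s ((hasDerivAt_id s).mul_const a)
    simp only [Function.comp_def, id_eq, one_mul] at h
    exact h.deriv
  rw [hd1]
  have hc := (hcn (t * a)).comp t ((hasDerivAt_id t).mul_const a)
  have hd := (hdn (t * a)).comp t ((hasDerivAt_id t).mul_const a)
  simp only [Function.comp_def, id_eq, one_mul] at hc hd
  have h2 : deriv (fun s => cn (s * a) k * dn (s * a) k * a) t = _ := ((hc.mul hd).mul_const a).deriv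
  rw [h2]
  set S := sn (t * a) k
  set C := cn (t * a) k
  set D := dn (t * a) k
  linear_combination (-a^2 * S) * hdn2 (t * a) + (-2 * k^2 * C^2 * S - S + S * k^2) * ha2
    + (-C^2 * S + S / 2) * hk2
end

section
/- Let k = δ/√(2(1+δ²)) and let y(t) = δ·cn(t√(1+δ²), k) be the Duffing solution. Then ξ(t) = dn(t√(1+δ²), k) satisfies the Hill equation ξ'' + (−δ²/2 + y(t)²)·ξ = 0. -/
theorem jacobi_dn_solves_hill (δ : ℝ) (sn cn dn : ℝ → ℝ → ℝ)
    (k : ℝ) (hk : k = δ / Real.sqrt (2 * (1 + δ^2)))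
    (hsn : ∀ u, HasDerivAt (fun v => sn v k) (cn u k * dn u k) u)
    (hcn : ∀ u, HasDerivAt (fun v => cn v k) (-(sn u k * dn u k)) u)
    (hdn : ∀ u, HasDerivAt (fun v => dn v k) (-(k^2 * cn u k * sn u k)) u)
    (hpyth : ∀ u, (sn u k)^2 + (cn u k)^2 = 1)
    (hdn2 : ∀ u, (dn u k)^2 - k^2 * (cn u k)^2 = 1 - k^2) :
    ∀ t : ℝ,
      deriv (deriv (fun s => dn (s * Real.sqrt (1 + δ^2)) k)) t
        + (-(δ^2 / 2) + (δ * cn (t * Real.sqrt (1 + δ^2)) k)^2)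
          * dn (t * Real.sqrt (1 + δ^2)) k = 0 := by
  set ω : ℝ := Real.sqrt (1 + δ^2) with hωdef
  have hpos : (0:ℝ) ≤ 1 + δ^2 := by positivity
  have hω2 : ω^2 = 1 + δ^2 := Real.sq_sqrt hpos
  have hk2 : k^2 = δ^2 / (2 * (1 + δ^2)) := by
    rw [hk, div_pow, Real.sq_sqrt (by positivity)]
  have hmul : ∀ t : ℝ, HasDerivAt (fun s : ℝ => s * ω) ω t := fun t => by
    simpa using (hasDerivAt_id t).mul_const ω
  have hg : ∀ t : ℝ, HasDerivAt (fun s => dn (s * ω) k)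
      (-(k^2 * cn (t*ω) k * sn (t*ω) k) * ω) t := fun t =>
    by have := (hdn (t*ω)).comp t (hmul t); exact this
  have hderiv1 : deriv (fun s => dn (s * ω) k)
      = fun t => -(k^2 * cn (t*ω) k * sn (t*ω) k) * ω :=
    funext fun t => (hg t).deriv
  intro t
  rw [hderiv1]
  have hcnω : HasDerivAt (fun s : ℝ => cn (s*ω) k) (-(sn (t*ω) k * dn (t*ω) k) * ω) t :=
    by have := (hcn (t*ω)).comp t (hmul t); exact this
  have hsnω : HasDerivAt (fun s : ℝ => sn (s*ω) k) (cn (t*ω) k * dn (t*ω) k * ω) t :=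
    by have := (hsn (t*ω)).comp t (hmul t); exact this
  have h2 : HasDerivAt (fun s : ℝ => -(k^2 * cn (s*ω) k * sn (s*ω) k) * ω)
      (-(k^2 * ((-(sn (t*ω) k * dn (t*ω) k) * ω) * sn (t*ω) k
        + cn (t*ω) k * (cn (t*ω) k * dn (t*ω) k * ω))) * ω) t := by
    have := (((hcnω.mul hsnω).const_mul (k^2)).neg).mul_const ω
    have hf : (fun s : ℝ => -(k^2 * cn (s*ω) k * sn (s*ω) k) * ω) = fun y => (-fun y => k^2 * ((fun s => cn (s*ω) k) * fun s => sn (s*ω) k) y) y * ω := by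
      funext x; simp only [Pi.neg_apply, Pi.mul_apply]; ring
    rw [hf]; exact this
  rw [h2.deriv]
  have hp := hpyth (t*ω)
  set c := cn (t*ω) k
  set s := sn (t*ω) k
  set d := dn (t*ω) k
  have hkw : k^2 * ω^2 = δ^2 / 2 := by
    rw [hk2, hω2]; field_simp
  linear_combination d*(s^2-c^2)*hkw + (δ^2/2*d)*hp
end

section
/- Let y be the Duffing solution with y(0) = −δ < 0, y'(0) = 0 and period T = T(δ), and let γ > 0. Then ∫₀^{T/2} √(γ + y(t)²) dt = 2√2 · ∫₀^{π/2} √((γ + δ²sin²θ)/(2 + δ² + δ²sin²θ)) dθ. -/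
open Set Filter intervalIntegral MeasureTheory

/-- Integrability of the Burdina period integrand on `[0,1]`. -/
lemma burdina_aux_integrable (δ : ℝ) :
    IntervalIntegrable (fun u : ℝ => 1 / Real.sqrt ((2 + δ^2 + δ^2 * u^2) * (1 - u^2)))
      MeasureTheory.volume 0 1 := by
  have hbig : IntervalIntegrable (fun u : ℝ => ((1 : ℝ) - u) ^ (-(1/2) : ℝ))
      MeasureTheory.volume 0 1 := by
    have h := (intervalIntegrable_rpow' (a := 0) (b := 1)
      (show (-1 : ℝ) < -(1/2) by norm_num)).comp_sub_left 1
    simpa using h.symm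
  refine hbig.mono_fun ?_ ?_
  · apply Measurable.aestronglyMeasurable
    have hm : Measurable fun u : ℝ => Real.sqrt ((2 + δ^2 + δ^2 * u^2) * (1 - u^2)) :=
      (Real.continuous_sqrt.comp (by continuity)).measurable
    simpa [one_div] using hm
  · rw [Filter.EventuallyLE, ae_restrict_iff' measurableSet_uIoc]
    refine Filter.Eventually.of_forall (fun u hu => ?_)
    rw [Set.uIoc_of_le (by norm_num : (0:ℝ) ≤ 1)] at hu
    obtain ⟨hu0, hu1⟩ := hu
    have h1u : (0:ℝ) ≤ 1 - u := by linarith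
    have hr : ((1:ℝ) - u) ^ (-(1/2) : ℝ) = 1 / Real.sqrt (1 - u) := by
      rw [Real.rpow_neg h1u, Real.sqrt_eq_rpow, one_div]
      norm_num
    rw [hr]
    have hnn : (0:ℝ) ≤ 1 / Real.sqrt ((2 + δ^2 + δ^2 * u^2) * (1 - u^2)) := by positivity
    have hnn' : (0:ℝ) ≤ 1 / Real.sqrt (1 - u) := by positivity
    rw [Real.norm_of_nonneg hnn, Real.norm_of_nonneg hnn']
    rcases eq_or_lt_of_le hu1 with h1 | h1
    · subst h1
      norm_num
    apply one_div_le_one_div_of_le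
    · have h2 : (0:ℝ) < 1 - u := by linarith
      have h3 : (0:ℝ) < (2 + δ^2 + δ^2 * u^2) * (1 - u^2) := by
        have : (0:ℝ) < 1 - u^2 := by nlinarith
        nlinarith [sq_nonneg δ, sq_nonneg (δ*u)]
      positivity
    · apply Real.sqrt_le_sqrt
      nlinarith [h1u, hu0.le, sq_nonneg (δ*u), sq_nonneg δ, mul_nonneg h1u hu0.le,
        mul_nonneg (mul_nonneg h1u hu0.le) (sq_nonneg δ), mul_nonneg h1u (sq_nonneg (δ*u)),
        mul_nonneg h1u (sq_nonneg δ)]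

set_option maxHeartbeats 2000000 in
theorem burdina_integral_formula (δ γ : ℝ) (hδ : 0 < δ) (hγ : 0 < γ)
    (y y' : ℝ → ℝ)
    (hy : ∀ t, HasDerivAt y (y' t) t)
    (hy' : ∀ t, HasDerivAt y' (-(y t) - (y t)^3) t)
    (h0 : y 0 = -δ) (h0' : y' 0 = 0)
    (T : ℝ)
    (hT : T = 4 * Real.sqrt 2 *
      ∫ θ in (0:ℝ)..1, 1 / Real.sqrt ((2 + δ^2 + δ^2 * θ^2) * (1 - θ^2)))
    (hper : ∀ t, y (t + T) = y t) :
    (∫ t in (0:ℝ)..(T/2), Real.sqrt (γ + (y t)^2)) =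
    2 * Real.sqrt 2 *
      ∫ θ in (0:ℝ)..(Real.pi/2),
        Real.sqrt ((γ + δ^2 * (Real.sin θ)^2) / (2 + δ^2 + δ^2 * (Real.sin θ)^2)) := by
  have hyc : Continuous y := continuous_iff_continuousAt.mpr fun t => (hy t).continuousAt
  have hy'c : Continuous y' := continuous_iff_continuousAt.mpr fun t => (hy' t).continuousAt
  -- Energy identity
  have energy : ∀ t, (y' t)^2 = (δ^2 - (y t)^2) * (2 + δ^2 + (y t)^2) / 2 := by
    have hE : ∀ t, HasDerivAt (fun t => (y' t)^2 + (y t)^2 + (y t)^4 / 2) 0 t := by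
      intro t
      have h1 : HasDerivAt (fun t => (y' t)^2 + (y t)^2 + (y t)^4 / 2)
          (2 * y' t ^ 1 * (-(y t) - (y t)^3) + 2 * y t ^ 1 * y' t +
            4 * y t ^ 3 * y' t / 2) t :=
        (((hy' t).pow 2).add ((hy t).pow 2)).add (((hy t).pow 4).div_const 2)
      convert h1 using 1
      ring
    have hconst : ∀ t, (y' t)^2 + (y t)^2 + (y t)^4 / 2
        = (y' 0)^2 + (y 0)^2 + (y 0)^4 / 2 :=
      fun t => is_const_of_deriv_eq_zero
        (fun t => ((hE t).differentiableAt : DifferentiableAt ℝ _ t))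
        (fun t => (hE t).deriv) t 0
    intro t
    have := hconst t
    rw [h0, h0'] at this
    nlinarith [this]
  have hyle : ∀ t, (y t)^2 ≤ δ^2 := by
    intro t
    nlinarith [energy t, sq_nonneg (y' t), sq_nonneg (y t)]
  -- T positive
  have hTpos : 0 < T := by
    rw [hT]
    have hI : 0 < ∫ u in (0:ℝ)..1, 1 / Real.sqrt ((2 + δ^2 + δ^2 * u^2) * (1 - u^2)) := by
      refine intervalIntegral_pos_of_pos_on (burdina_aux_integrable δ) (fun x hx => ?_) one_pos
      have h1 : (0:ℝ) < (2 + δ^2 + δ^2 * x^2) * (1 - x^2) := by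
        have : (0:ℝ) < 1 - x^2 := by nlinarith [hx.1, hx.2]
        nlinarith [sq_nonneg δ, sq_nonneg (δ*x)]
      positivity
    positivity
  -- initial positivity of y'
  obtain ⟨ε, hεpos, hεT, hε⟩ : ∃ ε, 0 < ε ∧ ε ≤ T ∧ ∀ t ∈ Icc 0 ε, 0 < -(y t) - (y t)^3 := by
    have hcont : Continuous (fun t => -(y t) - (y t)^3) := by
      exact (hyc.neg).sub (hyc.pow 3)
    have h00 : (0:ℝ) < -(y 0) - (y 0)^3 := by
      rw [h0]; nlinarith [hδ, sq_nonneg δ]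
    have hev : ∀ᶠ t in nhds (0:ℝ), 0 < -(y t) - (y t)^3 :=
      ContinuousAt.eventually_lt (continuousAt_const) (hcont.continuousAt (x := 0)) h00
    obtain ⟨ε', hε'pos, hball⟩ := Metric.eventually_nhds_iff.mp hev
    refine ⟨min (ε'/2) T, lt_min (by linarith) hTpos, min_le_right _ _, fun t ht => ?_⟩
    apply hball
    rw [Real.dist_eq, sub_zero, abs_of_nonneg ht.1]
    calc t ≤ min (ε'/2) T := ht.2
    _ ≤ ε'/2 := min_le_left _ _
    _ < ε' := by linarith
  have hy'eps : ∀ t ∈ Ioc 0 ε, 0 < y' t := by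
    have hsm : StrictMonoOn y' (Icc 0 ε) := by
      apply strictMonoOn_of_deriv_pos (convex_Icc _ _) hy'c.continuousOn
      intro x hx
      rw [interior_Icc] at hx
      rw [(hy' x).deriv]
      exact hε x ⟨hx.1.le, hx.2.le⟩
    intro t ht
    have := hsm (left_mem_Icc.mpr (by linarith [ht.1, ht.2])) ⟨ht.1.le, ht.2⟩ ht.1
    rwa [h0'] at this
  have hyT : y T = -δ := by
    have := hper 0
    rw [zero_add, h0] at this
    exact this
  -- first zero of y' after 0
  set S : Set ℝ := {t | t ∈ Icc ε T ∧ y' t = 0} with hS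
  have hSne : S.Nonempty := by
    by_contra hne
    have hno : ∀ t ∈ Icc ε T, y' t ≠ 0 := by
      intro t ht h
      exact hne ⟨t, ht, h⟩
    have hpos : ∀ t ∈ Icc ε T, 0 < y' t := by
      intro t ht
      by_contra hle
      push_neg at hle
      have hlt : y' t < 0 := lt_of_le_of_ne hle (hno t ht)
      have hε' : 0 < y' ε := hy'eps ε ⟨hεpos, le_rfl⟩
      have h0mem : (0:ℝ) ∈ Icc (y' t) (y' ε) := ⟨hlt.le, hε'.le⟩
      obtain ⟨s, hs, hs0⟩ := intermediate_value_Icc' ht.1 (hy'c.continuousOn) h0mem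
      exact hno s ⟨hs.1, hs.2.trans ht.2⟩ hs0
    have hsm : StrictMonoOn y (Icc 0 T) := by
      apply strictMonoOn_of_deriv_pos (convex_Icc _ _) hyc.continuousOn
      intro x hx
      rw [interior_Icc] at hx
      rw [(hy x).deriv]
      rcases le_or_gt x ε with h | h
      · exact hy'eps x ⟨hx.1, h⟩
      · exact hpos x ⟨h.le, hx.2.le⟩
    have := hsm (left_mem_Icc.mpr hTpos.le) (right_mem_Icc.mpr hTpos.le) hTpos
    rw [h0, hyT] at this
    exact lt_irrefl _ this
  have hScl : IsClosed S := by
    have : S = Icc ε T ∩ y' ⁻¹' {0} := by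
      ext t
      constructor
      · exact fun h => ⟨h.1, h.2⟩
      · exact fun h => ⟨h.1, h.2⟩
    rw [this]
    exact isClosed_Icc.inter (isClosed_singleton.preimage hy'c)
  set t₁ := sInf S with ht₁
  have ht₁S : t₁ ∈ S := hScl.csInf_mem hSne ⟨ε, fun x hx => hx.1.1⟩
  have ht₁pos : 0 < t₁ := lt_of_lt_of_le hεpos ht₁S.1.1
  have ht₁T : t₁ ≤ T := ht₁S.1.2
  have hy'pos : ∀ t ∈ Ioo 0 t₁, 0 < y' t := by
    intro t ht
    rcases le_or_gt t ε with h | h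
    · exact hy'eps t ⟨ht.1, h⟩
    · by_contra hle
      push_neg at hle
      have htT : t ≤ T := ht.2.le.trans ht₁T
      have hne : y' t ≠ 0 := by
        intro h0''
        have : t₁ ≤ t := csInf_le ⟨ε, fun x hx => hx.1.1⟩ ⟨⟨h.le, htT⟩, h0''⟩
        exact absurd ht.2 (not_lt.mpr this)
      have hlt : y' t < 0 := lt_of_le_of_ne hle hne
      have hε' : 0 < y' ε := hy'eps ε ⟨hεpos, le_rfl⟩
      obtain ⟨s, hs, hs0⟩ := intermediate_value_Icc' h.le (hy'c.continuousOn)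
        (⟨hlt.le, hε'.le⟩ : (0:ℝ) ∈ Icc (y' t) (y' ε))
      have : t₁ ≤ s := csInf_le ⟨ε, fun x hx => hx.1.1⟩ ⟨⟨hs.1, hs.2.trans htT⟩, hs0⟩
      have : t₁ ≤ t := this.trans hs.2
      exact absurd ht.2 (not_lt.mpr this)
  have hmono : StrictMonoOn y (Icc 0 t₁) := by
    apply strictMonoOn_of_deriv_pos (convex_Icc _ _) hyc.continuousOn
    intro x hx
    rw [interior_Icc] at hx
    rw [(hy x).deriv]
    exact hy'pos x hx
  have hyt₁ : y t₁ = δ := by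
    have h1 : -δ < y t₁ := by
      have := hmono (left_mem_Icc.mpr ht₁pos.le) (right_mem_Icc.mpr ht₁pos.le) ht₁pos
      rwa [h0] at this
    have e := energy t₁
    rw [ht₁S.2] at e
    have hsq : (y t₁)^2 = δ^2 := by nlinarith [hyle t₁, sq_nonneg (y t₁)]
    have hz : (y t₁ - δ) * (y t₁ + δ) = 0 := by linear_combination hsq
    rcases mul_eq_zero.mp hz with h | h
    · linarith
    · exfalso; linarith
  have hybnd : ∀ t ∈ Ioo 0 t₁, -δ < y t ∧ y t < δ := by
    intro t ht
    constructor
    · have := hmono (left_mem_Icc.mpr ht₁pos.le) ⟨ht.1.le, ht.2.le⟩ ht.1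
      rwa [h0] at this
    · have := hmono ⟨ht.1.le, ht.2.le⟩ (right_mem_Icc.mpr ht₁pos.le) ht.2
      rwa [hyt₁] at this
  -- the angle variable
  set θf : ℝ → ℝ := fun t => Real.arcsin (y t / δ) with hθf
  set hf : ℝ → ℝ := fun t => Real.sqrt ((2 + δ^2 + (y t)^2) / 2) with hhf
  have hθc : Continuous θf := Real.continuous_arcsin.comp (hyc.div_const δ)
  have hfc : Continuous hf :=
    Real.continuous_sqrt.comp ((continuous_const.add (hyc.pow 2)).div_const 2)
  have hθd : ∀ x ∈ Ioo 0 t₁, HasDerivAt θf (hf x) x := by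
    intro x hx
    obtain ⟨hb1, hb2⟩ := hybnd x hx
    have hA : 0 < δ^2 - (y x)^2 := by nlinarith
    have hB : (0:ℝ) < 2 + δ^2 + (y x)^2 := by positivity
    have hd1 : y x / δ ≠ -1 := by
      intro h
      rw [div_eq_iff hδ.ne'] at h
      nlinarith
    have hd2 : y x / δ ≠ 1 := by
      intro h
      rw [div_eq_iff hδ.ne'] at h
      nlinarith
    have harc := (Real.hasDerivAt_arcsin hd1 hd2).comp x ((hy x).div_const δ)
    convert harc using 1
    · rfl
    · rfl
    · rfl
    have h1 : 1 - (y x / δ)^2 = (δ^2 - (y x)^2) / δ^2 := by field_simp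
    have h2 : Real.sqrt (1 - (y x / δ)^2) = Real.sqrt (δ^2 - (y x)^2) / δ := by
      rw [h1, Real.sqrt_div hA.le, Real.sqrt_sq hδ.le]
    have hy'eq : y' x = Real.sqrt (δ^2 - (y x)^2) * hf x := by
      have e := energy x
      have hstep : y' x = Real.sqrt ((y' x)^2) := (Real.sqrt_sq (hy'pos x hx).le).symm
      rw [hstep, e, show (δ^2 - (y x)^2) * (2 + δ^2 + (y x)^2) / 2
          = (δ^2 - (y x)^2) * ((2 + δ^2 + (y x)^2) / 2) by ring,
        Real.sqrt_mul hA.le]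
    have hsA : 0 < Real.sqrt (δ^2 - (y x)^2) := Real.sqrt_pos.mpr hA
    show hf x = 1 / Real.sqrt (1 - (y x / δ)^2) * (y' x / δ)
    rw [h2, hy'eq]
    field_simp
  have hsin : ∀ t, Real.sin (θf t) = y t / δ := by
    intro t
    apply Real.sin_arcsin
    · rw [neg_le, ← neg_div]
      apply div_le_one_of_le₀ ?_ hδ.le
      nlinarith [hyle t]
    · apply div_le_one_of_le₀ ?_ hδ.le
      nlinarith [hyle t]
  have hθ0 : θf 0 = -(Real.pi/2) := by
    rw [hθf]
    simp only [h0]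
    rw [neg_div, div_self hδ.ne', Real.arcsin_neg, Real.arcsin_one]
  have hθt₁ : θf t₁ = Real.pi/2 := by
    rw [hθf]
    simp only [hyt₁]
    rw [div_self hδ.ne', Real.arcsin_one]
  -- the two θ-space integrands
  set F : ℝ → ℝ := fun φ => Real.sqrt 2 *
    Real.sqrt ((γ + δ^2 * (Real.sin φ)^2) / (2 + δ^2 + δ^2 * (Real.sin φ)^2)) with hF
  set F₂ : ℝ → ℝ := fun φ => Real.sqrt 2 *
    (1 / Real.sqrt (2 + δ^2 + δ^2 * (Real.sin φ)^2)) with hF₂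
  have hBpos : ∀ s : ℝ, (0:ℝ) < 2 + δ^2 + δ^2 * s^2 := fun s => by positivity
  have csin : Continuous fun x : ℝ => (Real.sin x)^2 := Real.continuous_sin.pow 2
  have cnum : Continuous fun x : ℝ => γ + δ^2 * (Real.sin x)^2 :=
    continuous_const.add (continuous_const.mul csin)
  have cden : Continuous fun x : ℝ => 2 + δ^2 + δ^2 * (Real.sin x)^2 :=
    continuous_const.add (continuous_const.mul csin)
  have hFc : Continuous F := by
    apply continuous_const.mul
    apply Real.continuous_sqrt.comp
    exact cnum.div cden (fun x => ne_of_gt (hBpos (Real.sin x)))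
  have hF₂c : Continuous F₂ := by
    apply continuous_const.mul
    exact continuous_one.div (Real.continuous_sqrt.comp cden)
      (fun x => ne_of_gt (Real.sqrt_pos.mpr (hBpos (Real.sin x))))
  have hsinsq : ∀ t, δ^2 * (Real.sin (θf t))^2 = (y t)^2 := by
    intro t
    rw [hsin t]
    field_simp
  have hid : ∀ t, hf t * F (θf t) = Real.sqrt (γ + (y t)^2) := by
    intro t
    have hB : (0:ℝ) < 2 + δ^2 + (y t)^2 := by positivity
    have : F (θf t) = Real.sqrt 2 * Real.sqrt ((γ + (y t)^2) / (2 + δ^2 + (y t)^2)) := by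
      rw [hF]
      simp only
      rw [hsinsq t]
    rw [this, hhf]
    simp only
    rw [← mul_assoc, ← Real.sqrt_mul (by positivity : (0:ℝ) ≤ (2 + δ^2 + (y t)^2)/2) 2,
      ← Real.sqrt_mul (by positivity : (0:ℝ) ≤ (2 + δ^2 + (y t)^2)/2 * 2)]
    congr 1
    field_simp
  have hid₂ : ∀ t, hf t * F₂ (θf t) = 1 := by
    intro t
    have hB : (0:ℝ) < 2 + δ^2 + (y t)^2 := by positivity
    have : F₂ (θf t) = Real.sqrt 2 * (1 / Real.sqrt (2 + δ^2 + (y t)^2)) := by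
      rw [hF₂]
      simp only
      rw [hsinsq t]
    rw [this, hhf]
    simp only
    rw [← mul_assoc, ← Real.sqrt_mul (by positivity : (0:ℝ) ≤ (2 + δ^2 + (y t)^2)/2) 2]
    rw [show (2 + δ^2 + (y t)^2)/2 * 2 = 2 + δ^2 + (y t)^2 by ring]
    rw [mul_one_div, div_self (ne_of_gt (Real.sqrt_pos.mpr hB))]
  -- change of variables on compact subintervals
  have cov : ∀ (G : ℝ → ℝ), Continuous G → ∀ a ∈ Ioo 0 t₁, ∀ b ∈ Ioo 0 t₁,
      (∫ x in a..b, hf x * G (θf x)) = ∫ u in θf a..θf b, G u := by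
    intro G hG a ha b hb
    have hsub : uIcc a b ⊆ Ioo 0 t₁ := (ordConnected_Ioo).uIcc_subset ha hb
    have := intervalIntegral.integral_comp_smul_deriv (f := θf) (f' := hf) (g := G)
      (fun x hx => hθd x (hsub hx)) hfc.continuousOn hG
    simpa [smul_eq_mul, Function.comp] using this
  -- primitives
  have hsqc : Continuous (fun t => Real.sqrt (γ + (y t)^2)) :=
    Real.continuous_sqrt.comp (continuous_const.add (hyc.pow 2))
  set P : ℝ → ℝ := fun b => ∫ t in (0:ℝ)..b, Real.sqrt (γ + (y t)^2) with hP
  have hPc : Continuous P :=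
    intervalIntegral.continuous_primitive (fun a b => hsqc.intervalIntegrable a b) 0
  set Q : ℝ → ℝ := fun φ => ∫ u in (-(Real.pi/2))..φ, F u with hQ
  have hQc : Continuous Q :=
    intervalIntegral.continuous_primitive (fun a b => hFc.intervalIntegrable a b) _
  set Q₂ : ℝ → ℝ := fun φ => ∫ u in (-(Real.pi/2))..φ, F₂ u with hQ₂
  have hQ₂c : Continuous Q₂ :=
    intervalIntegral.continuous_primitive (fun a b => hF₂c.intervalIntegrable a b) _
  have hPab : ∀ a b : ℝ, (∫ t in a..b, Real.sqrt (γ + (y t)^2)) = P b - P a := by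
    intro a b
    have h1 := intervalIntegral.integral_add_adjacent_intervals
      (hsqc.intervalIntegrable (μ := MeasureTheory.volume) 0 a) (hsqc.intervalIntegrable a b)
    rw [hP]
    simp only
    linarith
  have hQab : ∀ a b : ℝ, (∫ u in a..b, F u) = Q b - Q a := by
    intro a b
    have h1 := intervalIntegral.integral_add_adjacent_intervals
      (hFc.intervalIntegrable (μ := MeasureTheory.volume) (-(Real.pi/2)) a) (hFc.intervalIntegrable a b)
    rw [hQ]
    simp only
    linarith
  have hQ₂ab : ∀ a b : ℝ, (∫ u in a..b, F₂ u) = Q₂ b - Q₂ a := by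
    intro a b
    have h1 := intervalIntegral.integral_add_adjacent_intervals
      (hF₂c.intervalIntegrable (μ := MeasureTheory.volume) (-(Real.pi/2)) a) (hF₂c.intervalIntegrable a b)
    rw [hQ₂]
    simp only
    linarith
  -- approximating sequences
  set an : ℕ → ℝ := fun n => t₁ / (n + 2) with han_def
  set bn : ℕ → ℝ := fun n => t₁ - t₁ / (n + 2) with hbn_def
  have hanm : ∀ n : ℕ, an n ∈ Ioo 0 t₁ := by
    intro n
    have h2 : (0:ℝ) < (n:ℝ) + 2 := by positivity
    have h1 : 0 < t₁ / ((n:ℝ) + 2) := div_pos ht₁pos h2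
    have h3 : t₁ / ((n:ℝ) + 2) < t₁ := by
      have h4 : (1:ℝ) < (n:ℝ) + 2 := by
        have := Nat.cast_nonneg (α := ℝ) n
        linarith
      have h5 := div_lt_div_of_pos_left ht₁pos one_pos h4
      rwa [div_one] at h5
    exact ⟨h1, h3⟩
  have hbnm : ∀ n : ℕ, bn n ∈ Ioo 0 t₁ := by
    intro n
    obtain ⟨h1, h3⟩ := hanm n
    simp only [han_def] at h1 h3
    have hb : bn n = t₁ - t₁ / ((n:ℝ) + 2) := rfl
    rw [Set.mem_Ioo, hb]
    exact ⟨sub_pos.mpr h3, sub_lt_self _ h1⟩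
  have hinv : Filter.Tendsto (fun n : ℕ => t₁ / ((n:ℝ) + 2)) Filter.atTop (nhds 0) := by
    apply Filter.Tendsto.div_atTop tendsto_const_nhds
    exact Filter.tendsto_atTop_add_const_right _ 2 tendsto_natCast_atTop_atTop
  have han : Filter.Tendsto an Filter.atTop (nhds 0) := hinv
  have hbn : Filter.Tendsto bn Filter.atTop (nhds t₁) := by
    have h := Filter.Tendsto.sub (tendsto_const_nhds (x := t₁) (f := Filter.atTop (α := ℕ))) hinv
    rw [sub_zero] at h
    exact h
  -- main identity for F
  have hkey1 : (∫ t in (0:ℝ)..t₁, Real.sqrt (γ + (y t)^2))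
      = ∫ u in (-(Real.pi/2))..(Real.pi/2), F u := by
    have heq : ∀ n : ℕ, P (bn n) - P (an n) = Q (θf (bn n)) - Q (θf (an n)) := by
      intro n
      have h1 : (∫ t in (an n)..(bn n), Real.sqrt (γ + (y t)^2))
          = ∫ u in θf (an n)..θf (bn n), F u := by
        rw [← cov F hFc _ (hanm n) _ (hbnm n)]
        apply intervalIntegral.integral_congr
        intro x _
        exact (hid x).symm
      rw [hPab, hQab] at h1
      exact h1
    have l1 : Filter.Tendsto (fun n => P (bn n) - P (an n)) Filter.atTop
        (nhds (P t₁ - P 0)) := ((hPc.tendsto t₁).comp hbn).sub ((hPc.tendsto 0).comp han)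
    have l2 : Filter.Tendsto (fun n => Q (θf (bn n)) - Q (θf (an n))) Filter.atTop
        (nhds (Q (θf t₁) - Q (θf 0))) :=
      ((hQc.tendsto _).comp ((hθc.tendsto t₁).comp hbn)).sub
        ((hQc.tendsto _).comp ((hθc.tendsto 0).comp han))
    have hmain := tendsto_nhds_unique (Filter.Tendsto.congr heq l1) l2
    have hP0 : P 0 = 0 := intervalIntegral.integral_same
    have hQ0 : Q (θf 0) = 0 := by rw [hθ0]; exact intervalIntegral.integral_same
    rw [hP0, hQ0, hθt₁, sub_zero, sub_zero] at hmain
    exact hmain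
  -- main identity for F₂
  have hkey2 : t₁ = ∫ u in (-(Real.pi/2))..(Real.pi/2), F₂ u := by
    have heq : ∀ n : ℕ, bn n - an n = Q₂ (θf (bn n)) - Q₂ (θf (an n)) := by
      intro n
      have h1 : (∫ t in (an n)..(bn n), (1:ℝ))
          = ∫ u in θf (an n)..θf (bn n), F₂ u := by
        rw [← cov F₂ hF₂c _ (hanm n) _ (hbnm n)]
        apply intervalIntegral.integral_congr
        intro x _
        exact (hid₂ x).symm
      rw [integral_one, hQ₂ab] at h1
      exact h1
    have l1 : Filter.Tendsto (fun n => bn n - an n) Filter.atTop (nhds (t₁ - 0)) :=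
      hbn.sub han
    rw [sub_zero] at l1
    have l2 : Filter.Tendsto (fun n => Q₂ (θf (bn n)) - Q₂ (θf (an n))) Filter.atTop
        (nhds (Q₂ (θf t₁) - Q₂ (θf 0))) :=
      ((hQ₂c.tendsto _).comp ((hθc.tendsto t₁).comp hbn)).sub
        ((hQ₂c.tendsto _).comp ((hθc.tendsto 0).comp han))
    have hmain := tendsto_nhds_unique (Filter.Tendsto.congr heq l1) l2
    have hQ0 : Q₂ (θf 0) = 0 := by rw [hθ0]; exact intervalIntegral.integral_same
    rw [hQ0, hθt₁, sub_zero] at hmain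
    exact hmain
  -- evenness
  have heven : ∀ (G : ℝ → ℝ), Continuous G → (∀ x, G (-x) = G x) →
      (∫ u in (-(Real.pi/2))..(Real.pi/2), G u) = 2 * ∫ u in (0:ℝ)..(Real.pi/2), G u := by
    intro G hG hGe
    have h1 : (∫ u in (-(Real.pi/2))..(0:ℝ), G u) = ∫ u in (0:ℝ)..(Real.pi/2), G u := by
      have e1 : (∫ u in (-(Real.pi/2))..(0:ℝ), G u)
          = ∫ u in (-(Real.pi/2))..(0:ℝ), G (-u) := by
        apply intervalIntegral.integral_congr
        intro u _
        exact (hGe u).symm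
      rw [e1, intervalIntegral.integral_comp_neg (a := -(Real.pi/2)) (b := 0) (f := G),
        neg_zero, neg_neg]
    have h2 := intervalIntegral.integral_add_adjacent_intervals
      (hG.intervalIntegrable (μ := MeasureTheory.volume) (-(Real.pi/2)) 0)
      (hG.intervalIntegrable 0 (Real.pi/2))
    rw [← h2, h1]
    ring
  have hFeven : ∀ x, F (-x) = F x := by
    intro x
    simp only [hF, Real.sin_neg, neg_sq]
  have hF₂even : ∀ x, F₂ (-x) = F₂ x := by
    intro x
    simp only [hF₂, Real.sin_neg, neg_sq]
  -- the period integral in sine form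
  have hTform : (∫ u in (0:ℝ)..1, 1 / Real.sqrt ((2 + δ^2 + δ^2 * u^2) * (1 - u^2)))
      = ∫ x in (0:ℝ)..(Real.pi/2), 1 / Real.sqrt (2 + δ^2 + δ^2 * (Real.sin x)^2) := by
    set g : ℝ → ℝ := fun u => 1 / Real.sqrt ((2 + δ^2 + δ^2 * u^2) * (1 - u^2)) with hg
    set k : ℝ → ℝ := fun x => 1 / Real.sqrt (2 + δ^2 + δ^2 * (Real.sin x)^2) with hk
    have hkc : Continuous k :=
      continuous_one.div (Real.continuous_sqrt.comp cden)
        (fun x => ne_of_gt (Real.sqrt_pos.mpr (hBpos (Real.sin x))))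
    have hpolyc : Continuous fun u : ℝ => (2 + δ^2 + δ^2 * u^2) * (1 - u^2) :=
      (continuous_const.add (continuous_const.mul (continuous_pow 2))).mul
        (continuous_const.sub (continuous_pow 2))
    have hπ2 : (0:ℝ) < Real.pi/2 := by linarith [Real.pi_pos]
    have hsub : ∀ b, 0 ≤ b → b < Real.pi/2 →
        (∫ u in (0:ℝ)..(Real.sin b), g u) = ∫ x in (0:ℝ)..b, k x := by
      intro b hb0 hbπ
      have huIcc : uIcc (0:ℝ) b = Icc 0 b := uIcc_of_le hb0
      have hsinb1 : Real.sin b < 1 := by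
        have := Real.strictMonoOn_sin (a := b) (b := Real.pi/2)
          ⟨by linarith, by linarith⟩ ⟨by linarith, le_rfl⟩ hbπ
        rwa [Real.sin_pi_div_two] at this
      have hsinmono : ∀ x ∈ Icc (0:ℝ) b, Real.sin x ≤ Real.sin b := by
        intro x hx
        rcases eq_or_lt_of_le hx.2 with h | h
        · rw [h]
        · exact le_of_lt (Real.strictMonoOn_sin
            ⟨by linarith [hx.1], by linarith [hx.2]⟩ ⟨by linarith, hbπ.le⟩ h)
      have hgcont : ContinuousOn g (Real.sin '' uIcc (0:ℝ) b) := by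
        intro u hu
        obtain ⟨x, hx, rfl⟩ := hu
        rw [huIcc] at hx
        have h1 : 0 ≤ Real.sin x :=
          Real.sin_nonneg_of_nonneg_of_le_pi hx.1 (by linarith [Real.pi_pos, hx.2])
        have h2 : Real.sin x < 1 := lt_of_le_of_lt (hsinmono x hx) hsinb1
        have harg : 0 < (2 + δ^2 + δ^2 * (Real.sin x)^2) * (1 - (Real.sin x)^2) := by
          have hlt : (Real.sin x)^2 < 1 := by nlinarith
          nlinarith [hBpos (Real.sin x)]
        apply ContinuousAt.continuousWithinAt
        apply ContinuousAt.div continuousAt_const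
          ((Real.continuous_sqrt.comp hpolyc).continuousAt)
        exact ne_of_gt (Real.sqrt_pos.mpr harg)
      have hder : ∀ x ∈ uIcc (0:ℝ) b, HasDerivAt Real.sin (Real.cos x) x :=
        fun x _ => Real.hasDerivAt_sin x
      have hcv := intervalIntegral.integral_comp_smul_deriv'
        (f := Real.sin) (f' := Real.cos) (g := g)
        hder Real.continuous_cos.continuousOn hgcont
      rw [Real.sin_zero] at hcv
      rw [← hcv]
      apply intervalIntegral.integral_congr
      intro x hx
      rw [huIcc] at hx
      have hcos : 0 < Real.cos x := Real.cos_pos_of_mem_Ioo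
        ⟨by linarith [hx.1], lt_of_le_of_lt hx.2 hbπ⟩
      have hsq : 1 - (Real.sin x)^2 = (Real.cos x)^2 := by
        have := Real.sin_sq_add_cos_sq x
        linarith
      have hsB := Real.sqrt_pos.mpr (hBpos (Real.sin x))
      show Real.cos x • (g ∘ Real.sin) x = k x
      rw [smul_eq_mul, hg, hk]
      simp only [Function.comp]
      rw [show (2 + δ^2 + δ^2 * (Real.sin x)^2) * (1 - (Real.sin x)^2)
          = (2 + δ^2 + δ^2 * (Real.sin x)^2) * (Real.cos x)^2 by rw [hsq],
        Real.sqrt_mul (le_of_lt (hBpos (Real.sin x))), Real.sqrt_sq hcos.le]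
      field_simp
    set cn : ℕ → ℝ := fun n => Real.pi/2 - Real.pi/2 / (n+2) with hcn_def
    have hcnm : ∀ n : ℕ, 0 ≤ cn n ∧ cn n < Real.pi/2 := by
      intro n
      have h2 : (0:ℝ) < (n:ℝ) + 2 := by positivity
      have h2n : (2:ℝ) ≤ (n:ℝ) + 2 := by
        have := Nat.cast_nonneg (α := ℝ) n
        linarith
      have hle : Real.pi/2/((n:ℝ)+2) ≤ Real.pi/2/2 :=
        div_le_div_of_nonneg_left hπ2.le two_pos h2n
      have hpos : 0 < Real.pi/2/((n:ℝ)+2) := div_pos hπ2 h2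
      constructor
      · simp only [hcn_def]
        linarith
      · simp only [hcn_def]
        linarith
    have hcnt : Filter.Tendsto cn Filter.atTop (nhds (Real.pi/2)) := by
      have hinv2 : Filter.Tendsto (fun n : ℕ => Real.pi/2 / ((n:ℝ)+2)) Filter.atTop (nhds 0) :=
        Filter.Tendsto.div_atTop tendsto_const_nhds
          (Filter.tendsto_atTop_add_const_right _ 2 tendsto_natCast_atTop_atTop)
      have h := Filter.Tendsto.sub
        (tendsto_const_nhds (x := Real.pi/2) (f := Filter.atTop (α := ℕ))) hinv2
      rw [sub_zero] at h
      exact h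
    have hsint : Filter.Tendsto (fun n => Real.sin (cn n)) Filter.atTop (nhds 1) := by
      have h := (Real.continuous_sin.tendsto (Real.pi/2)).comp hcnt
      rwa [Real.sin_pi_div_two] at h
    have hG1 : ContinuousOn (fun c => ∫ u in (0:ℝ)..c, g u) (uIcc (0:ℝ) 1) :=
      intervalIntegral.continuousOn_primitive_interval' (burdina_aux_integrable δ) left_mem_uIcc
    have hmem : ∀ n, Real.sin (cn n) ∈ uIcc (0:ℝ) 1 := by
      intro n
      obtain ⟨h0n, h1n⟩ := hcnm n
      rw [uIcc_of_le zero_le_one]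
      have hpil : cn n ≤ Real.pi := by
        have h2 : Real.pi / 2 ≤ Real.pi := by linarith [Real.pi_pos]
        exact le_trans h1n.le h2
      exact ⟨Real.sin_nonneg_of_nonneg_of_le_pi h0n hpil, Real.sin_le_one _⟩
    have l1 : Filter.Tendsto (fun n => ∫ u in (0:ℝ)..Real.sin (cn n), g u) Filter.atTop
        (nhds (∫ u in (0:ℝ)..1, g u)) := by
      have hw : ContinuousWithinAt (fun c => ∫ u in (0:ℝ)..c, g u) (uIcc (0:ℝ) 1) 1 :=
        hG1 1 right_mem_uIcc
      apply hw.tendsto.comp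
      apply tendsto_nhdsWithin_of_tendsto_nhds_of_eventually_within _ hsint
      exact Filter.Eventually.of_forall hmem
    have l2 : Filter.Tendsto (fun n => ∫ x in (0:ℝ)..cn n, k x) Filter.atTop
        (nhds (∫ x in (0:ℝ)..Real.pi/2, k x)) :=
      ((intervalIntegral.continuous_primitive
        (fun a b => hkc.intervalIntegrable (μ := MeasureTheory.volume) a b) 0).tendsto _).comp hcnt
    have heqn : ∀ n, (∫ u in (0:ℝ)..Real.sin (cn n), g u) = ∫ x in (0:ℝ)..cn n, k x :=
      fun n => hsub (cn n) (hcnm n).1 (hcnm n).2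
    exact tendsto_nhds_unique (Filter.Tendsto.congr heqn l1) l2
  -- t₁ = T/2
  have ht₁T2 : t₁ = T / 2 := by
    have h2 : t₁ = 2 * ∫ u in (0:ℝ)..(Real.pi/2), F₂ u := by
      rw [hkey2, heven F₂ hF₂c hF₂even]
    have h3 : (∫ u in (0:ℝ)..(Real.pi/2), F₂ u)
        = Real.sqrt 2 * ∫ x in (0:ℝ)..(Real.pi/2), 1 / Real.sqrt (2 + δ^2 + δ^2 * (Real.sin x)^2) := by
      rw [hF₂]
      exact intervalIntegral.integral_const_mul _ _
    rw [h3, ← hTform] at h2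
    rw [h2, hT]
    ring
  -- finish
  rw [← ht₁T2, hkey1, heven F hFc hFeven, hF]
  rw [intervalIntegral.integral_const_mul]
  ring
end
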